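/- Let A and B be structures in a first-order language L. The following are equivalent: (1) every primitive positive L-sentence that holds in A also holds in B; (2) there exist an index set I, an ultrafilter U on I, and a homomorphism from A into the ultrapower B^I/U of B. -/

import Mathlib

open FirstOrder FirstOrder.Language

universe u v w

namespace Epic

variable {L : FirstOrder.Language.{u, v}}

/-- A finite conjunction of atomic formulas. -/
inductive IsConjAtomic {α : Type w} : ∀ {n : ℕ}, L.BoundedFormula α n → Prop
  | of_isAtomic {n : ℕ} {φ : L.BoundedFormula α n} : φ.IsAtomic → IsConjAtomic φ
  | inf {n : ℕ} {φ ψ : L.BoundedFormula α n} :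
      IsConjAtomic φ → IsConjAtomic ψ → IsConjAtomic (φ ⊓ ψ)

/-- A primitive positive formula: a block of existential quantifiers in front of a
finite conjunction of atomic formulas. -/
inductive IsPP {α : Type w} : ∀ {n : ℕ}, L.BoundedFormula α n → Prop
  | of_conj {n : ℕ} {φ : L.BoundedFormula α n} : IsConjAtomic φ → IsPP φ
  | ex {n : ℕ} {φ : L.BoundedFormula α (n + 1)} : IsPP φ → IsPP φ.ex

variable (L) in
/-- A class of `L`-structures with universes in `Type u`. -/
def StrClass := ∀ (M : Type u) [L.Structure M], Prop

/-- The formula `φ(x₁,…,xₙ,y)` defines a (partial) function in the class `K`: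
`K ⊨ ∀ x̄ y z, φ(x̄,y) ∧ φ(x̄,z) → y = z`. -/
def DefinesFn (K : StrClass L) {n : ℕ} (φ : L.Formula (Fin (n + 1))) : Prop :=
  ∀ (C : Type u) [L.Structure C], K C → ∀ (v : Fin n → C) (y z : C),
    φ.Realize (Fin.snoc v y) → φ.Realize (Fin.snoc v z) → y = z

/-- `A` is an epic substructure of `B` in the class `K`: any two homomorphisms from `B`
into a member of `K` agreeing on `A` are equal. -/
def IsEpicSubstructure (K : StrClass L) {B : Type u} [L.Structure B]
    (A : L.Substructure B) : Prop :=
  ∀ (C : Type u) [L.Structure C], K C → ∀ g g' : B →[L] C,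
    (∀ a ∈ A, g a = g' a) → g = g'

/-- `h` is a `K`-epimorphism: it is right-cancellable for homomorphisms into members of `K`. -/
def IsEpi (K : StrClass L) {A B : Type u} [L.Structure A] [L.Structure B]
    (h : A →[L] B) : Prop :=
  ∀ (C : Type u) [L.Structure C], K C → ∀ g g' : B →[L] C,
    g.comp h = g'.comp h → g = g'

/-! ### Auxiliary lemmas -/

theorem IsConjAtomic.relabel {α : Type*} {β : Type*} {m n : ℕ} {φ : L.BoundedFormula α m}
    (h : IsConjAtomic φ) (f : α → β ⊕ (Fin n)) : IsConjAtomic (φ.relabel f) := by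
  induction h with
  | of_isAtomic ha => exact .of_isAtomic (ha.relabel f)
  | inf _ _ ih1 ih2 => exact .inf ih1 ih2

theorem isPP_exs {α : Type*} : ∀ {n : ℕ} {φ : L.BoundedFormula α n}, IsPP φ → IsPP φ.exs
  | 0, _, h => h
  | _ + 1, φ, h => show IsPP φ.ex.exs from isPP_exs h.ex

theorem isPP_iExs {α : Type*} {γ : Type*} [Finite γ] {φ : L.Formula α}
    (h : IsConjAtomic φ) (f : α → Empty ⊕ γ) : IsPP ((φ.relabel f).iExs γ) :=
  isPP_exs (.of_conj ((h.relabel _).relabel _))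

theorem isConjAtomic_foldr {α : Type*} (l : List (L.Formula α)) (ψ : L.Formula α)
    (hψ : IsConjAtomic ψ) (h : ∀ χ ∈ l, IsConjAtomic χ) :
    IsConjAtomic (l.foldr (· ⊓ ·) ψ) := by
  induction l with
  | nil => exact hψ
  | cons a l ih =>
    exact .inf (h a List.mem_cons_self) (ih fun χ hχ => h χ (List.mem_cons_of_mem a hχ))

theorem realize_foldr_inf {M : Type*} [L.Structure M] {α : Type*}
    (l : List (L.Formula α)) (ψ : L.Formula α) (v : α → M) :
    ((l.foldr (· ⊓ ·) ψ).Realize v) ↔ ψ.Realize v ∧ ∀ χ ∈ l, χ.Realize v := by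
  induction l with
  | nil => simp
  | cons a l ih =>
    simp only [List.foldr_cons, Formula.realize_inf, ih, List.mem_cons]
    constructor
    · rintro ⟨h1, h2, h3⟩
      exact ⟨h2, fun χ hχ => hχ.elim (fun e => e ▸ h1) (h3 χ)⟩
    · rintro ⟨h1, h2⟩
      exact ⟨h2 a (Or.inl rfl), h1, fun χ hχ => h2 χ (Or.inr hχ)⟩

theorem IsPP.realize_hom {M N : Type*} [L.Structure M] [L.Structure N] (g : M →[L] N)
    {α : Type*} : ∀ {n : ℕ} {φ : L.BoundedFormula α n}, IsPP φ →
    ∀ {v : α → M} {xs : Fin n → M}, φ.Realize v xs → φ.Realize (g ∘ v) (g ∘ xs) := by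
  intro n φ h
  induction h with
  | of_conj hc =>
    induction hc with
    | of_isAtomic ha =>
      intro v xs
      induction ha with
      | equal t₁ t₂ =>
        simp only [BoundedFormula.realize_bdEqual, ← Sum.comp_elim, HomClass.realize_term]
        exact fun h => congrArg g h
      | rel R ts =>
        simp only [BoundedFormula.realize_rel, ← Sum.comp_elim, HomClass.realize_term]
        exact fun h => HomClass.map_rel g R _ h
    | inf h1 h2 ih1 ih2 =>
      intro v xs
      simp only [BoundedFormula.realize_inf]
      exact fun h => ⟨ih1 h.1, ih2 h.2⟩
  | ex hψ ih =>
    intro v xs h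
    obtain ⟨a, ha⟩ := BoundedFormula.realize_ex.1 h
    refine BoundedFormula.realize_ex.2 ⟨g a, ?_⟩
    have := ih ha
    rwa [Fin.comp_snoc] at this

theorem relMap_zero_iff {ι : Type*} (U : Ultrafilter ι) {C : Type*} [L.Structure C]
    (r : L.Relations 0) (x : Fin 0 → (U : Filter ι).Product fun _ : ι => C) :
    Structure.RelMap r x ↔ Structure.RelMap r (finZeroElim : Fin 0 → C) := by
  have hx : x = fun k => (((finZeroElim : Fin 0 → ∀ _ : ι, C) k) :
      (U : Filter ι).Product fun _ : ι => C) := funext fun k => k.elim0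
  rw [hx]
  refine Iff.trans (relMap_quotient_mk' (s := (U : Filter ι).productSetoid fun _ : ι => C)
    r (finZeroElim : Fin 0 → ∀ _ : ι, C)) ?_
  show (∀ᶠ a : ι in U, Structure.RelMap r
    fun i : Fin 0 => (finZeroElim : Fin 0 → ∀ _ : ι, C) i a) ↔ _
  have h1 : ∀ a : ι, (fun i : Fin 0 => (finZeroElim : Fin 0 → ∀ _ : ι, C) i a)
      = (finZeroElim : Fin 0 → C) := fun a => funext fun i => i.elim0
  simp only [h1]
  exact Filter.eventually_const

theorem hom_sentence_transfer {M N : Type*} [L.Structure M] [L.Structure N] (g : M →[L] N)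
    {φ : L.Sentence} (h : IsPP φ) (hM : M ⊨ φ) : N ⊨ φ := by
  have h2 := h.realize_hom g (v := (default : Empty → M)) (xs := (default : Fin 0 → M)) hM
  have e1 : ((g : M → N) ∘ (default : Empty → M)) = (default : Empty → N) := funext isEmptyElim
  have e2 : ((g : M → N) ∘ (default : Fin 0 → M)) = (default : Fin 0 → N) :=
    funext fun i => i.elim0
  rwa [e1, e2] at h2

section EmptyTransfer

variable {M N : Type*} [L.Structure M] [L.Structure N] [IsEmpty M]
  (hrel : ∀ r : L.Relations 0,
    Structure.RelMap r (finZeroElim : Fin 0 → M) → Structure.RelMap r (finZeroElim : Fin 0 → N))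

include hrel

theorem isAtomic_transfer_of_isEmpty {n : ℕ} {φ : L.BoundedFormula Empty n}
    (h : φ.IsAtomic) (v : Empty → M) (xs : Fin n → M) (v' : Empty → N) (xs' : Fin n → N)
    (hm : φ.Realize v xs) : φ.Realize v' xs' := by
  induction h with
  | equal t₁ t₂ => exact isEmptyElim (Term.realize (Sum.elim v xs) t₁)
  | @rel k R ts =>
    cases k with
    | succ k => exact isEmptyElim (Term.realize (Sum.elim v xs) (ts 0))
    | zero =>
      rw [BoundedFormula.realize_rel] at hm ⊢
      have e1 : (fun i : Fin 0 => Term.realize (Sum.elim v xs) (ts i))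
          = (finZeroElim : Fin 0 → M) := funext fun i => i.elim0
      have e2 : (fun i : Fin 0 => Term.realize (Sum.elim v' xs') (ts i))
          = (finZeroElim : Fin 0 → N) := funext fun i => i.elim0
      rw [e1] at hm
      rw [e2]
      exact hrel R hm

theorem isConjAtomic_transfer_of_isEmpty {n : ℕ} {φ : L.BoundedFormula Empty n}
    (h : IsConjAtomic φ) (v : Empty → M) (xs : Fin n → M) (v' : Empty → N) (xs' : Fin n → N)
    (hm : φ.Realize v xs) : φ.Realize v' xs' := by
  induction h with
  | of_isAtomic ha => exact isAtomic_transfer_of_isEmpty hrel ha v xs v' xs' hm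
  | inf h1 h2 ih1 ih2 =>
    rw [BoundedFormula.realize_inf] at hm ⊢
    exact ⟨ih1 hm.1, ih2 hm.2⟩

theorem isPP_transfer_of_isEmpty {n : ℕ} {φ : L.BoundedFormula Empty n}
    (h : IsPP φ) (v : Empty → M) (xs : Fin n → M) (v' : Empty → N) (xs' : Fin n → N)
    (hm : φ.Realize v xs) : φ.Realize v' xs' := by
  induction h with
  | of_conj hc => exact isConjAtomic_transfer_of_isEmpty hrel hc v xs v' xs' hm
  | ex hψ ih =>
    obtain ⟨a, _⟩ := BoundedFormula.realize_ex.1 hm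
    exact isEmptyElim a

end EmptyTransfer

variable (L) in
/-- The index type for the positive atomic diagram of `A`. -/
def Diag (A : Type u) [L.Structure A] : Type max u v :=
  Σ n : ℕ, {p : L.Formula (Fin n) × (Fin n → A) // p.1.IsAtomic ∧ p.1.Realize p.2}

/-- Lemma 4; Hodges, Thm. 6.5.7.  Every primitive positive sentence true
in `A` is true in `B` iff there is a homomorphism from `A` into some ultrapower of `B`. -/
theorem pp_sentences_preserved_iff_hom_into_ultrapower {L : FirstOrder.Language.{u, u}}
    (A B : Type u) [L.Structure A] [L.Structure B] :
    (∀ φ : L.Sentence, IsPP φ → A ⊨ φ → B ⊨ φ) ↔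
      ∃ (ι : Type u) (U : Ultrafilter ι),
        Nonempty (A →[L] (U : Filter ι).Product fun _ : ι => B) := by
  classical
  constructor
  · intro h
    rcases isEmpty_or_nonempty A with hA | hA
    · -- `A` is empty
      refine ⟨PUnit, pure PUnit.unit, ⟨⟨fun a => isEmptyElim a, ?_, ?_⟩⟩⟩
      · intro n f x
        exact isEmptyElim (Structure.funMap f x)
      · intro n r x hx
        cases n with
        | succ n => exact isEmptyElim (x 0)
        | zero =>
          have hpp : IsPP (Relations.formula r (finZeroElim : Fin 0 → L.Term Empty)) :=
            .of_conj (.of_isAtomic (BoundedFormula.IsAtomic.rel _ _))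
          have hAs : A ⊨ Relations.formula r (finZeroElim : Fin 0 → L.Term Empty) := by
            refine Formula.realize_rel.2 ?_
            convert hx using 2
          have hBs := h _ hpp hAs
          rw [Sentence.Realize, Formula.realize_rel] at hBs
          refine (relMap_zero_iff (pure PUnit.unit) r _).2 ?_
          convert hBs using 2
    · -- `A` is nonempty
      obtain ⟨a₀⟩ := hA
      have hB : Nonempty B := by
        set ψB : L.Sentence := BoundedFormula.ex
            ((Term.var (Sum.inr 0) : L.Term (Empty ⊕ Fin 1)).bdEqual
              (Term.var (Sum.inr 0))) with hψB
        have hpp : IsPP ψB :=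
          .ex (.of_conj (.of_isAtomic (BoundedFormula.IsAtomic.equal _ _)))
        have hAs : A ⊨ ψB := BoundedFormula.realize_ex.2 ⟨a₀, rfl⟩
        obtain ⟨b, -⟩ := BoundedFormula.realize_ex.1 (h _ hpp hAs)
        exact ⟨b⟩
      -- Step 1: every finite subset of the positive atomic diagram of `A`
      -- can be realized in `B`.
      have key : ∀ i : Finset (Epic.Diag L A), ∃ f : A → B,
          ∀ p ∈ i, p.2.1.1.Realize (f ∘ p.2.1.2) := by
        intro i
        set S : Finset A := i.biUnion (fun p => Finset.univ.image p.2.1.2) with hS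
        have hmem : ∀ p ∈ i, ∀ k, p.2.1.2 k ∈ S := fun p hp k =>
          Finset.mem_biUnion.2 ⟨p, hp, Finset.mem_image.2 ⟨k, Finset.mem_univ k, rfl⟩⟩
        set rmap : A → Empty ⊕ Option {a // a ∈ S} :=
          (fun a => Sum.inr (if h : a ∈ S then some ⟨a, h⟩ else none)) with hrmap
        set χ : L.Formula A :=
          (i.toList.map fun p => Formula.relabel p.2.1.2 p.2.1.1).foldr (· ⊓ ·)
            (Term.equal (Term.var a₀) (Term.var a₀)) with hχdef
        have hχ : IsConjAtomic χ := by
          refine isConjAtomic_foldr _ _ (.of_isAtomic ?_) ?_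
          · exact BoundedFormula.IsAtomic.equal _ _
          · intro ψ hψ
            rw [List.mem_map] at hψ
            obtain ⟨p, hp, rfl⟩ := hψ
            exact (IsConjAtomic.of_isAtomic p.2.2.1).relabel _
        have hAχ : A ⊨ Formula.iExs (Option {a // a ∈ S}) (χ.relabel rmap) := by
          refine (Formula.realize_iExs (v := (default : Empty → A))).2
            ⟨fun (o : Option {a // a ∈ S}) => o.elim a₀ Subtype.val, ?_⟩
          rw [Formula.realize_relabel]
          show Formula.Realize χ (fun a => Sum.elim (default : Empty → A)
            (fun o : Option {a // a ∈ S} => o.elim a₀ Subtype.val) (rmap a))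
          rw [realize_foldr_inf]
          constructor
          · rw [Formula.realize_equal]
          · intro ψ hψ
            rw [List.mem_map] at hψ
            obtain ⟨p, hp, rfl⟩ := hψ
            rw [Formula.realize_relabel]
            have e : ((fun a => Sum.elim (default : Empty → A)
                (fun o : Option {a // a ∈ S} => o.elim a₀ Subtype.val) (rmap a)) ∘ p.2.1.2)
                = p.2.1.2 := by
              funext k
              have hk := hmem p (Finset.mem_toList.1 hp) k
              simp only [hrmap, Function.comp_apply, Sum.elim_inr, hk, dif_pos, Option.elim]
            rw [e]
            exact p.2.2.2
        have hBχ := h _ (isPP_iExs hχ rmap) hAχ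
        obtain ⟨w, hw⟩ := (Formula.realize_iExs (v := (default : Empty → B))).1 hBχ
        rw [Formula.realize_relabel] at hw
        refine ⟨fun a => Sum.elim (default : Empty → B) w (rmap a), ?_⟩
        intro p hp
        rw [realize_foldr_inf] at hw
        have h3 := hw.2 _ (List.mem_map.2 ⟨p, Finset.mem_toList.2 hp, rfl⟩)
        rw [Formula.realize_relabel] at h3
        exact h3
      choose F hF using key
      -- Step 2: assemble the maps into a homomorphism into an ultrapower.
      set U : Ultrafilter (Finset (Epic.Diag L A)) := Ultrafilter.of Filter.atTop with hUdef
      have hU : ∀ p : Epic.Diag L A, ∀ᶠ i in (U : Filter (Finset (Epic.Diag L A))), p ∈ i := by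
        intro p
        have h1 : ∀ᶠ i in (Filter.atTop : Filter (Finset (Epic.Diag L A))), {p} ≤ i :=
          Filter.eventually_ge_atTop {p}
        have h2 : ∀ᶠ i in (U : Filter (Finset (Epic.Diag L A))), {p} ≤ i :=
          (Ultrafilter.of_le (Filter.atTop : Filter (Finset (Epic.Diag L A)))) h1
        exact h2.mono fun i hi => Finset.singleton_subset_iff.1 hi
      have hFp : ∀ p : Epic.Diag L A, ∀ᶠ i in (U : Filter (Finset (Epic.Diag L A))),
          p.2.1.1.Realize (fun k => F i (p.2.1.2 k)) :=
        fun p => (hU p).mono fun i hi => hF i p hi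
      haveI : ∀ _ : Finset (Epic.Diag L A), Nonempty B := fun _ => hB
      refine ⟨Finset (Epic.Diag L A), U, ⟨⟨fun a =>
        ((fun i => F i a : ∀ _ : Finset (Epic.Diag L A), B) :
          (U : Filter (Finset (Epic.Diag L A))).Product fun _ => B), ?_, ?_⟩⟩⟩
      · -- the map commutes with function symbols
        intro n f x
        set y : A := Structure.funMap f x with hy
        set φf : L.Formula (Fin (n + 1)) :=
          Term.equal (Term.func f fun k => Term.var k.castSucc) (Term.var (Fin.last n)) with hφf
        have hat : φf.IsAtomic := BoundedFormula.IsAtomic.equal _ _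
        have hre : φf.Realize (Fin.snoc x y : Fin (n + 1) → A) := by
          rw [Formula.realize_equal]
          simp [Term.realize_func, Term.realize_var, Fin.snoc_castSucc, Fin.snoc_last, hy]
        have hev := hFp ⟨n + 1, ⟨(φf, (Fin.snoc x y : Fin (n + 1) → A)), hat, hre⟩⟩
        have h2 := (Ultraproduct.realize_formula_cast φf
          (fun k i => F i ((Fin.snoc x y : Fin (n + 1) → A) k))).2 hev
        rw [Formula.realize_equal] at h2
        simp only [Term.realize_func, Term.realize_var] at h2
        have e1 : ∀ k : Fin n, (fun i => F i ((Fin.snoc x y : Fin (n + 1) → A) k.castSucc))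
            = fun i => F i (x k) := fun k => funext fun i => by rw [Fin.snoc_castSucc]
        have e2 : (fun i => F i ((Fin.snoc x y : Fin (n + 1) → A) (Fin.last n)))
            = fun i => F i y := funext fun i => by rw [Fin.snoc_last]
        simp only [e1, e2] at h2
        exact h2.symm
      · -- the map commutes with relation symbols
        intro n r x hx
        set φr : L.Formula (Fin n) := Relations.formula r Term.var with hφr
        have hat : φr.IsAtomic := BoundedFormula.IsAtomic.rel _ _
        have hre : φr.Realize x := Formula.realize_rel.2 hx
        have hev := hFp ⟨n, ⟨(φr, x), hat, hre⟩⟩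
        have h2 := (Ultraproduct.realize_formula_cast φr (fun k i => F i (x k))).2 hev
        rw [Formula.realize_rel] at h2
        exact h2
  · rintro ⟨ι, U, ⟨g⟩⟩ φ hφ hAφ
    rcases isEmpty_or_nonempty B with hBe | hBn
    · haveI : Nonempty ι := Filter.nonempty_of_neBot (U : Filter ι)
      haveI hpe : IsEmpty ((U : Filter ι).Product fun _ : ι => B) := by
        refine ⟨fun q => ?_⟩
        obtain ⟨f, -⟩ := Quotient.exists_rep q
        exact isEmptyElim (f (Classical.arbitrary ι))
      haveI : IsEmpty A := ⟨fun a => isEmptyElim (g a)⟩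
      have hrel : ∀ r : L.Relations 0, Structure.RelMap r (finZeroElim : Fin 0 → A) →
          Structure.RelMap r (finZeroElim : Fin 0 → B) := by
        intro r hr
        have h1 := g.map_rel r finZeroElim hr
        exact (relMap_zero_iff U r _).1 h1
      exact isPP_transfer_of_isEmpty hrel hφ default default default default hAφ
    · haveI : ∀ _ : ι, Nonempty B := fun _ => hBn
      have h1 : ((U : Filter ι).Product fun _ : ι => B) ⊨ φ := hom_sentence_transfer g hφ hAφ
      have h2 := (Ultraproduct.sentence_realize φ).1 h1
      obtain ⟨i, hi⟩ := h2.exists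
      exact hi

end Epic
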